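/- Let $H$, $H_1$, $H_2$ be finite-dimensional Hilbert spaces, $A: H_1 \to H$, $B: H_2 \to H$ linear, $c \in H$, $g$ proper convex lsc, $f(x,y)=\tfrac12\|Ax+By+c\|^2+g(y)$, $F(x)=\min_y f(x,y)$, $L = \|A\|^2 > 0$. If $y_i$ minimizes $f(x_i,\cdot)$ and $d(x_i)=A^*(Ax_i+By_i+c)$ for $i=1,2$, then $F(x_1) \ge F(x_2) + \langle d(x_2), x_1 - x_2\rangle + \tfrac{1}{2L}\|d(x_1)-d(x_2)\|^2$. -/

import Mathlib

open scoped RealInnerProductSpace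
set_option maxHeartbeats 800000

/-- Lower bound inequality for the marginal function
`F x = min_y (½‖Ax + By + c‖² + g(y))` with `g` proper convex lsc
(`EReal`-valued, never `⊥`): if `yᵢ` minimizes `f(xᵢ, ·)` and
`d xᵢ = A*(A xᵢ + B yᵢ + c)`, then
`F x₁ ≥ F x₂ + ⟪d x₂, x₁ - x₂⟫ + (1/(2L))‖d x₁ - d x₂‖²` with `L = ‖A‖² > 0`. -/
theorem stmt_2 {H H₁ H₂ : Type*}
    [NormedAddCommGroup H] [InnerProductSpace ℝ H] [FiniteDimensional ℝ H]
    [NormedAddCommGroup H₁] [InnerProductSpace ℝ H₁] [FiniteDimensional ℝ H₁]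
    [NormedAddCommGroup H₂] [InnerProductSpace ℝ H₂] [FiniteDimensional ℝ H₂]
    (A : H₁ →L[ℝ] H) (B : H₂ →L[ℝ] H) (c : H) (g : H₂ → EReal)
    -- g is proper (never -∞, somewhere finite):
    (hg_bot : ∀ y, g y ≠ ⊥) (hg_proper : ∃ y, g y ≠ ⊤)
    -- g is convex:
    (hg_convex : ∀ y₁ y₂ : H₂, ∀ t : ℝ, 0 ≤ t → t ≤ 1 →
      g (t • y₁ + (1 - t) • y₂) ≤ (t : EReal) * g y₁ + ((1 - t : ℝ) : EReal) * g y₂)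
    -- g is lower semicontinuous:
    (hg_lsc : LowerSemicontinuous g)
    -- the joint functional f(x,y) = ½‖Ax + By + c‖² + g(y):
    (f : H₁ → H₂ → EReal)
    (hf : ∀ x y, f x y = (((1 / 2 : ℝ) * ‖A x + B y + c‖ ^ 2 : ℝ) : EReal) + g y)
    (x₁ x₂ : H₁) (y₁ y₂ : H₂)
    -- y₁ minimizes f(x₁, ·) and y₂ minimizes f(x₂, ·), with finite values:
    (hy₁ : ∀ y, f x₁ y₁ ≤ f x₁ y) (hy₂ : ∀ y, f x₂ y₂ ≤ f x₂ y)
    (hy₁fin : g y₁ ≠ ⊤) (hy₂fin : g y₂ ≠ ⊤)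
    (L : ℝ) (hLdef : L = ‖A‖ ^ 2) (hLpos : 0 < L) :
    (f x₁ y₁).toReal ≥ (f x₂ y₂).toReal
      + ⟪A.adjoint (A x₂ + B y₂ + c), x₁ - x₂⟫
      + (1 / (2 * L)) * ‖A.adjoint (A x₁ + B y₁ + c) - A.adjoint (A x₂ + B y₂ + c)‖ ^ 2 := by
  have ha : g y₁ = ((g y₁).toReal : EReal) := (EReal.coe_toReal hy₁fin (hg_bot y₁)).symm
  have hb : g y₂ = ((g y₂).toReal : EReal) := (EReal.coe_toReal hy₂fin (hg_bot y₂)).symm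
  set a := (g y₁).toReal
  set b := (g y₂).toReal
  set r₁ := A x₁ + B y₁ + c with hr₁
  set r₂ := A x₂ + B y₂ + c with hr₂
  set u := B (y₁ - y₂) with hu
  -- real version of the optimality inequality at parameter t
  have step : ∀ t : ℝ, 0 < t → t ≤ 1 →
      (1/2 : ℝ) * ‖r₂‖^2 + b ≤ (1/2) * ‖r₂ + t • u‖^2 + (t*a + (1-t)*b) := by
    intro t ht0 ht1
    have hyt : y₂ + t • (y₁ - y₂) = t • y₁ + (1 - t) • y₂ := by
      simp [smul_sub, sub_smul]; abel
    have h1 := hy₂ (y₂ + t • (y₁ - y₂))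
    rw [hf, hf] at h1
    have hAB : A x₂ + B (y₂ + t • (y₁ - y₂)) + c = r₂ + t • u := by
      simp only [map_add, map_smul, hr₂, hu, map_sub]
      abel
    rw [hAB] at h1
    have h2 := hg_convex y₁ y₂ t (le_of_lt ht0) ht1
    rw [← hyt, ha, hb] at h2
    have e1 : (((1/2 : ℝ) * ‖A x₂ + B y₂ + c‖^2 : ℝ) : EReal) + g y₂
        = (((1/2 : ℝ) * ‖r₂‖^2 + b : ℝ) : EReal) := by
      rw [hb, ← hr₂, ← EReal.coe_add]
    have e2 : (((1/2 : ℝ) * ‖r₂ + t • u‖^2 : ℝ) : EReal) + g (y₂ + t • (y₁ - y₂))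
        ≤ (((1/2 : ℝ) * ‖r₂ + t • u‖^2 + (t*a + (1-t)*b) : ℝ) : EReal) := by
      refine le_trans (add_le_add le_rfl h2) (le_of_eq ?_)
      simp only [EReal.coe_add, EReal.coe_mul]
    rw [e1] at h1
    exact EReal.coe_le_coe_iff.mp (h1.trans e2)
  -- derive the directional optimality inequality
  have key : 0 ≤ ⟪r₂, u⟫ + a - b := by
    have step2 : ∀ t : ℝ, 0 < t → t ≤ 1 → 0 ≤ 2 * (⟪r₂, u⟫ + a - b) + t * ‖u‖^2 := by
      intro t ht0 ht1
      have h := step t ht0 ht1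
      have hexp : ‖r₂ + t • u‖^2 = ‖r₂‖^2 + 2 * (t * ⟪r₂, u⟫) + t^2 * ‖u‖^2 := by
        rw [norm_add_sq_real, real_inner_smul_right, norm_smul]
        rw [Real.norm_eq_abs, abs_of_pos ht0]
        ring
      rw [hexp] at h
      have h7 : t * 0 ≤ t * (2 * (⟪r₂, u⟫ + a - b) + t * ‖u‖^2) := by nlinarith
      have h8 := (mul_le_mul_iff_right₀ ht0).mp h7
      linarith
    by_contra hneg
    push_neg at hneg
    set c0 := ⟪r₂, u⟫ + a - b with hc0
    have hU : (0:ℝ) < ‖u‖^2 + 1 := by positivity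
    set t := min 1 ((-c0) / (‖u‖^2 + 1)) with htdef
    have ht0 : 0 < t := lt_min one_pos (div_pos (by linarith) hU)
    have ht1 : t ≤ 1 := min_le_left _ _
    have h := step2 t ht0 ht1
    have ht2 : t ≤ (-c0) / (‖u‖^2 + 1) := min_le_right _ _
    have h5 : t * (‖u‖^2 + 1) ≤ -c0 := by
      rw [← le_div_iff₀ hU]; exact ht2
    have h6 : t * ‖u‖^2 ≤ -c0 := by nlinarith
    linarith
  -- rewrite the goal in real terms
  have hfa : (f x₁ y₁).toReal = (1/2 : ℝ) * ‖r₁‖^2 + a := by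
    rw [hf, ha, ← hr₁, ← EReal.coe_add, EReal.toReal_coe]
  have hfb : (f x₂ y₂).toReal = (1/2 : ℝ) * ‖r₂‖^2 + b := by
    rw [hf, hb, ← hr₂, ← EReal.coe_add, EReal.toReal_coe]
  rw [hfa, hfb]
  have hadj : ⟪A.adjoint r₂, x₁ - x₂⟫ = ⟪r₂, A (x₁ - x₂)⟫ :=
    ContinuousLinearMap.adjoint_inner_left A (x₁ - x₂) r₂
  have hsum : A (x₁ - x₂) = (r₁ - r₂) - u := by
    simp only [map_sub, hr₁, hr₂, hu]
    abel
  have hinner : ⟪r₂, A (x₁ - x₂)⟫ = ⟪r₂, r₁ - r₂⟫ - ⟪r₂, u⟫ := by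
    rw [hsum, inner_sub_right]
  have hexp : ‖r₁‖^2 = ‖r₂‖^2 + 2 * ⟪r₂, r₁ - r₂⟫ + ‖r₁ - r₂‖^2 := by
    have h := norm_add_sq_real r₂ (r₁ - r₂)
    simpa using h
  have hAnorm : ‖A.adjoint r₁ - A.adjoint r₂‖^2 ≤ L * ‖r₁ - r₂‖^2 := by
    rw [← map_sub]
    have h1 : ‖A.adjoint (r₁ - r₂)‖ ≤ ‖A.adjoint‖ * ‖r₁ - r₂‖ :=
      (A.adjoint).le_opNorm _
    have h2 : ‖(ContinuousLinearMap.adjoint (𝕜 := ℝ)) A‖ = ‖A‖ := by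
      exact LinearIsometryEquiv.norm_map ContinuousLinearMap.adjoint A
    rw [h2] at h1
    have h3 : (0:ℝ) ≤ ‖A.adjoint (r₁ - r₂)‖ := norm_nonneg _
    nlinarith [norm_nonneg (r₁ - r₂), norm_nonneg A]
  have hL2 : (1 / (2 * L)) * ‖A.adjoint r₁ - A.adjoint r₂‖^2 ≤ (1/2) * ‖r₁ - r₂‖^2 := by
    have h0 : (0:ℝ) < 1 / (2 * L) := by positivity
    calc (1 / (2 * L)) * ‖A.adjoint r₁ - A.adjoint r₂‖^2
        ≤ (1 / (2 * L)) * (L * ‖r₁ - r₂‖^2) := by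
          exact mul_le_mul_of_nonneg_left hAnorm (le_of_lt h0)
      _ = (1/2) * ‖r₁ - r₂‖^2 := by field_simp
  rw [hadj, hinner]
  linarith [key, hL2, hexp]
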